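/- For the rotated lemniscate r̄² = sin(2θ̄) with θ̄ ∈ [0, π/4], the arc length from the origin to the point with radius r̄ ∈ [0,1] equals ∫_0^r̄ dt/√(1-t⁴). Consequently, sleaf_2 of the arc length l̄ from the origin equals the radial distance r̄. -/

import Mathlib

open Real MeasureTheory Set intervalIntegral

lemma lem_integrable : IntervalIntegrable (fun t : ℝ => 1 / Real.sqrt (1 - t ^ 4)) volume 0 1 := by
  have hg : IntervalIntegrable (fun t : ℝ => (1 - t) ^ (-(1/2) : ℝ)) volume 0 1 := by
    have h := (intervalIntegral.intervalIntegrable_rpow' (a := 0) (b := 1)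
      (r := (-(1/2) : ℝ)) (by norm_num)).comp_sub_left 1
    simpa using h.symm
  have hm : Measurable (fun t : ℝ => 1 / Real.sqrt (1 - t ^ 4)) :=
    measurable_const.div
      ((Real.continuous_sqrt.comp (continuous_const.sub (continuous_pow 4))).measurable)
  refine hg.mono_fun hm.aestronglyMeasurable ?_
  rw [Filter.EventuallyLE, MeasureTheory.ae_restrict_iff' measurableSet_uIoc]
  filter_upwards with x hx
  rw [Set.uIoc_of_le (by norm_num : (0:ℝ) ≤ 1)] at hx
  obtain ⟨hx0, hx1⟩ := hx
  have h1t : (0:ℝ) ≤ 1 - x := by linarith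
  rw [Real.norm_eq_abs, Real.norm_eq_abs, abs_of_nonneg (by positivity),
    abs_of_nonneg (Real.rpow_nonneg h1t _)]
  rw [Real.rpow_neg h1t, ← Real.sqrt_eq_rpow, one_div]
  rcases eq_or_lt_of_le hx1 with h | h
  · rw [h]; norm_num
  · have h4 : x ^ 4 ≤ x := pow_le_of_le_one hx0.le hx1 (by norm_num)
    have hlt : (0:ℝ) < 1 - x := by linarith
    exact inv_anti₀ (Real.sqrt_pos.mpr hlt) (Real.sqrt_le_sqrt (by linarith))

lemma lem_integrable_sub {a b : ℝ} (ha : 0 ≤ a) (hab : a ≤ b) (hb : b ≤ 1) :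
    IntervalIntegrable (fun t : ℝ => 1 / Real.sqrt (1 - t ^ 4)) volume a b := by
  apply lem_integrable.mono_set
  rw [Set.uIcc_of_le hab, Set.uIcc_of_le (by norm_num : (0:ℝ) ≤ 1)]
  exact Set.Icc_subset_Icc ha hb

lemma lem_F_lt {a b : ℝ} (ha : 0 ≤ a) (hab : a < b) (hb : b ≤ 1) :
    (∫ t in (0:ℝ)..a, 1 / Real.sqrt (1 - t ^ 4)) < ∫ t in (0:ℝ)..b, 1 / Real.sqrt (1 - t ^ 4) := by
  have hia := lem_integrable_sub le_rfl ha (le_trans hab.le hb)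
  have hiab := lem_integrable_sub ha hab.le hb
  have hpos : 0 < ∫ t in a..b, 1 / Real.sqrt (1 - t ^ 4) := by
    refine intervalIntegral.intervalIntegral_pos_of_pos_on hiab ?_ hab
    intro x hx
    have hx0 : 0 ≤ x := le_of_lt (lt_of_le_of_lt ha hx.1)
    have hx1 : x < 1 := lt_of_lt_of_le hx.2 hb
    have h4 : x ^ 4 < 1 := pow_lt_one₀ hx0 hx1 (by norm_num)
    have : (0:ℝ) < 1 - x ^ 4 := by linarith
    positivity
  have := intervalIntegral.integral_add_adjacent_intervals hia hiab
  linarith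

lemma lem_deriv_eq {t : ℝ} (ht0 : 0 < t) (ht1 : t < 1) :
    Real.sqrt ((deriv (fun s => s * Real.cos (Real.arcsin (s ^ 2) / 2)) t) ^ 2 +
      (deriv (fun s => s * Real.sin (Real.arcsin (s ^ 2) / 2)) t) ^ 2)
      = 1 / Real.sqrt (1 - t ^ 4) := by
  have h4 : t ^ 4 < 1 := pow_lt_one₀ ht0.le ht1 (by norm_num)
  have hlt : (0:ℝ) < 1 - t ^ 4 := by linarith
  have h1 : t ^ 2 ≠ -1 := by nlinarith
  have h2 : t ^ 2 ≠ 1 := by nlinarith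
  set d := Real.sqrt (1 - t ^ 4) with hd
  have hd0 : 0 < d := Real.sqrt_pos.mpr hlt
  have hdne : d ≠ 0 := ne_of_gt hd0
  have hd2 : d ^ 2 = 1 - t ^ 4 := Real.sq_sqrt hlt.le
  have hθ : HasDerivAt (fun s : ℝ => Real.arcsin (s ^ 2) / 2) (t / d) t := by
    have hinner : HasDerivAt (fun s : ℝ => s ^ 2) (2 * t) t := by
      simpa using hasDerivAt_pow 2 t
    have ha0 : HasDerivAt (fun s : ℝ => Real.arcsin (s ^ 2))
        ((1 / Real.sqrt (1 - (t ^ 2) ^ 2)) * (2 * t)) t :=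
      HasDerivAt.comp (h₂ := Real.arcsin) (h := fun s : ℝ => s ^ 2) t (Real.hasDerivAt_arcsin h1 h2) hinner
    have ha := ha0.div_const 2
    refine ha.congr_deriv ?_
    rw [show ((t:ℝ) ^ 2) ^ 2 = t ^ 4 by ring, ← hd]
    field_simp
  set c := Real.cos (Real.arcsin (t ^ 2) / 2) with hc
  set s := Real.sin (Real.arcsin (t ^ 2) / 2) with hs
  have hf : HasDerivAt (fun s : ℝ => s * Real.cos (Real.arcsin (s ^ 2) / 2))
      (1 * c + t * (-s * (t / d))) t := (hasDerivAt_id t).mul hθ.cos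
  have hg : HasDerivAt (fun s : ℝ => s * Real.sin (Real.arcsin (s ^ 2) / 2))
      (1 * s + t * (c * (t / d))) t := (hasDerivAt_id t).mul hθ.sin
  rw [hf.deriv, hg.deriv]
  have hcs : c ^ 2 + s ^ 2 = 1 := by
    rw [hc, hs]; exact Real.cos_sq_add_sin_sq _
  have expand : (1 * c + t * (-s * (t / d))) ^ 2 + (1 * s + t * (c * (t / d))) ^ 2
      = (c ^ 2 + s ^ 2) * (d ^ 2 + t ^ 4) / d ^ 2 := by
    field_simp
    ring
  have key : (1 * c + t * (-s * (t / d))) ^ 2 + (1 * s + t * (c * (t / d))) ^ 2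
      = 1 / (1 - t ^ 4) := by
    rw [expand, hcs, hd2]
    norm_num
  rw [key, one_div, Real.sqrt_inv, one_div]

theorem lemniscate_arc_length_sleaf (π₂ : ℝ) (hπ : π₂ = 2 * ∫ t in (0:ℝ)..1, 1 / Real.sqrt (1 - t ^ 4))
    (sleaf : ℝ → ℝ)
    (hs : ∀ l ∈ Set.Icc 0 (π₂ / 2), sleaf l ∈ Set.Icc (0:ℝ) 1 ∧
      (∫ t in (0:ℝ)..(sleaf l), 1 / Real.sqrt (1 - t ^ 4)) = l) :
    ∀ r ∈ Set.Icc (0:ℝ) 1,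
      (∫ t in (0:ℝ)..r,
        Real.sqrt ((deriv (fun s => s * Real.cos (Real.arcsin (s ^ 2) / 2)) t) ^ 2 +
          (deriv (fun s => s * Real.sin (Real.arcsin (s ^ 2) / 2)) t) ^ 2))
        = (∫ t in (0:ℝ)..r, 1 / Real.sqrt (1 - t ^ 4)) ∧
      sleaf (∫ t in (0:ℝ)..r, 1 / Real.sqrt (1 - t ^ 4)) = r := by
  intro r hr
  obtain ⟨hr0, hr1⟩ := hr
  constructor
  · apply intervalIntegral.integral_congr_ae
    have h1 : ∀ᵐ x : ℝ, x ≠ (1:ℝ) := by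
      have h0 : volume ({1} : Set ℝ) = 0 := measure_singleton 1
      rw [MeasureTheory.ae_iff]
      simpa [not_not, Set.setOf_eq_eq_singleton] using h0
    filter_upwards [h1] with x hx hmem
    rw [Set.uIoc_of_le hr0] at hmem
    exact lem_deriv_eq hmem.1 (lt_of_le_of_ne (le_trans hmem.2 hr1) hx)
  · set l := ∫ t in (0:ℝ)..r, 1 / Real.sqrt (1 - t ^ 4) with hl
    have hir := lem_integrable_sub le_rfl hr0 hr1
    have hir1 := lem_integrable_sub hr0 hr1 le_rfl
    have hl0 : 0 ≤ l := intervalIntegral.integral_nonneg hr0 (fun u _ => by positivity)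
    have hl1 : l ≤ π₂ / 2 := by
      have hadd := intervalIntegral.integral_add_adjacent_intervals hir hir1
      have hnn : 0 ≤ ∫ t in r..1, 1 / Real.sqrt (1 - t ^ 4) :=
        intervalIntegral.integral_nonneg hr1 (fun u _ => by positivity)
      rw [hπ]; linarith
    obtain ⟨⟨hs0, hs1⟩, hFl⟩ := hs l ⟨hl0, hl1⟩
    by_contra hne
    rcases lt_or_gt_of_ne hne with h | h
    · have := lem_F_lt hs0 h hr1
      rw [hFl] at this; exact lt_irrefl _ this
    · have := lem_F_lt hr0 h hs1
      rw [hFl] at this; exact lt_irrefl _ this
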